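/- arXiv:2601.14464 — 2 statements merged into one kernel-verified Lean document; each statement's English description precedes it below -/
import Mathlib

section
/- Let X be a finite type and let ⊵ᴿ and ⊵* be two relations on X. Suppose there exist a, b ∈ X with a ≠ b such that a ⊵* b but ¬(a ⊵ᴿ b). Then there exists a distribution h over latent preference types such that: h is ⊵ᴿ-submonotone; the induced distribution satisfies p_h(x,x') = 0 for every pair with x ⊵ᴿ x'; and h is not ⊵*-submonotone, i.e. h assigns positive weight to a pair of strict preferences that is not ⊵*-submonotone. -/
open scoped NNReal

/-- A latent preference type on `X`: a pair of strict preferences (strict total orders),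
the unit's preferences at the two values of a binary instrument. -/
def LatentPref (X : Type*) : Type _ :=
  {pr : (X → X → Prop) × (X → X → Prop) //
    IsStrictTotalOrder X pr.1 ∧ IsStrictTotalOrder X pr.2}

/-- A pair of preferences `(r₀, r₁)` is `⊵`-submonotone (no preference reversals against
the relation `tr`): whenever `tr a b` and `a` is `r₀`-preferred to `b`, `a` remains
`r₁`-preferred to `b`. -/
def SubmonoPair {X : Type*} (tr : X → X → Prop)
    (pr : (X → X → Prop) × (X → X → Prop)) : Prop :=
  ∀ a b : X, tr a b → pr.1 a b → pr.2 a b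

/-- `m` is the greatest element of the strict preference `r` (the rational choice). -/
def GreatestElem {X : Type*} (r : X → X → Prop) (m : X) : Prop :=
  ∀ x : X, x ≠ m → r m x

/-- A distribution over latent preference types: nonnegative weights of total mass one
(the set of latent preference types over a finite `X` is finite). -/
def IsPrefDist {X : Type*} (h : LatentPref X → ℝ≥0) : Prop :=
  ∑ᶠ pr : LatentPref X, h pr = 1

/-- A `⊵`-submonotone distribution over latent preference types: a distribution that
vanishes on every pair of preferences that is not `⊵`-submonotone. -/
def SubmonoDist {X : Type*} (tr : X → X → Prop) (h : LatentPref X → ℝ≥0) : Prop :=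
  IsPrefDist h ∧ ∀ pr : LatentPref X, ¬ SubmonoPair tr pr.1 → h pr = 0

/-- The distribution over instrument-response types induced by a distribution over latent
preference types: `inducedIR h x x'` is the total weight of latent preference types whose
first preference has greatest element `x` and whose second has greatest element `x'`. -/
noncomputable def inducedIR {X : Type*} (h : LatentPref X → ℝ≥0) (x x' : X) : ℝ≥0 :=
  ∑ᶠ (pr : LatentPref X)
    (_ : GreatestElem pr.1.1 x ∧ GreatestElem pr.1.2 x'), h pr

/-- **Lemma, part 2.** If the relation `⊵*` relates some pair `(a, b)` of
distinct elements not related by `⊵ᴿ`, then there is a distribution over latent preference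
types that is `⊵ᴿ`-submonotone and induces a distribution over instrument-response types
vanishing on the pairs ruled out by `⊵ᴿ`, yet is not `⊵*`-submonotone: it assigns positive
weight to a pair of strict preferences that is not `⊵*`-submonotone. -/
theorem submonotone_weaker_relation_insufficient
    {X : Type*} [Fintype X]
    (trR trS : X → X → Prop)
    (a b : X) (hab : a ≠ b) (hS : trS a b) (hR : ¬ trR a b) :
    ∃ h : LatentPref X → ℝ≥0, SubmonoDist trR h ∧
      (∀ x x' : X, trR x x' → inducedIR h x x' = 0) ∧
      ∃ pr : LatentPref X, ¬ SubmonoPair trS pr.1 ∧ 0 < h pr := by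
  classical
  set n := Fintype.card X with hn
  obtain ⟨e⟩ : Nonempty (X ≃ Fin n) := ⟨Fintype.equivFin X⟩
  set f : X → ℕ := fun x => if x = a then n + 1 else if x = b then n else e x with hf
  set g : X → ℕ := fun x => if x = b then n + 1 else if x = a then n else e x with hg
  have hecard : ∀ x : X, (e x : ℕ) < n := fun x => (e x).2
  have hfc : ∀ c : X, c ≠ a → c ≠ b → f c = e c := by
    intro c h1 h2; simp [hf, h1, h2]
  have hgc : ∀ c : X, c ≠ a → c ≠ b → g c = e c := by
    intro c h1 h2; simp [hg, h1, h2]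
  have hfa : f a = n + 1 := by simp [hf]
  have hfb : f b = n := by simp [hf, hab.symm]
  have hga : g a = n := by simp [hg, hab]
  have hgb : g b = n + 1 := by simp [hg]
  have inj_of_val : ∀ (a' b' : X) (u : X → ℕ),
      (∀ x : X, (x = a' ∧ u x = n + 1) ∨ (x = b' ∧ u x = n) ∨
        (x ≠ a' ∧ x ≠ b' ∧ u x = e x)) → Function.Injective u := by
    intro a' b' u huval x y hxy
    rcases huval x with ⟨hx, hvx⟩ | ⟨hx, hvx⟩ | ⟨hx1, hx2, hvx⟩ <;>
      rcases huval y with ⟨hy, hvy⟩ | ⟨hy, hvy⟩ | ⟨hy1, hy2, hvy⟩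
    · rw [hx, hy]
    · exfalso; rw [hvx, hvy] at hxy; omega
    · exfalso; rw [hvx, hvy] at hxy; have := hecard y; omega
    · exfalso; rw [hvx, hvy] at hxy; omega
    · rw [hx, hy]
    · exfalso; rw [hvx, hvy] at hxy; have := hecard y; omega
    · exfalso; rw [hvx, hvy] at hxy; have := hecard x; omega
    · exfalso; rw [hvx, hvy] at hxy; have := hecard x; omega
    · rw [hvx, hvy] at hxy; exact e.injective (Fin.ext hxy)
  have hf_inj : Function.Injective f := by
    apply inj_of_val a b f
    intro x
    by_cases h1 : x = a
    · exact Or.inl ⟨h1, h1 ▸ hfa⟩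
    by_cases h2 : x = b
    · exact Or.inr (Or.inl ⟨h2, h2 ▸ hfb⟩)
    · exact Or.inr (Or.inr ⟨h1, h2, hfc x h1 h2⟩)
  have hg_inj : Function.Injective g := by
    apply inj_of_val b a g
    intro x
    by_cases h2 : x = b
    · exact Or.inl ⟨h2, h2 ▸ hgb⟩
    by_cases h1 : x = a
    · exact Or.inr (Or.inl ⟨h1, h1 ▸ hga⟩)
    · exact Or.inr (Or.inr ⟨h2, h1, hgc x h1 h2⟩)
  have sto : ∀ (u : X → ℕ), Function.Injective u →
      IsStrictTotalOrder X (fun x y => u y < u x) := by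
    intro u hu
    haveI h1 : IsTrichotomous X (fun x y => u y < u x) := by
      constructor
      intro x y
      rcases lt_trichotomy (u x) (u y) with h1 | h1 | h1
      · intro _ h; exact absurd h1 h
      · intro _ _; exact hu h1
      · intro h _; exact absurd h1 h
    haveI h2 : IsIrrefl X (fun x y => u y < u x) := ⟨fun x => lt_irrefl (u x)⟩
    haveI h3 : IsTrans X (fun x y => u y < u x) := ⟨fun x y z hxy hyz => lt_trans hyz hxy⟩
    exact { }
  set r₀ : X → X → Prop := fun x y => f y < f x with hr₀
  set r₁ : X → X → Prop := fun x y => g y < g x with hr₁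
  set pr : LatentPref X := ⟨(r₀, r₁), sto f hf_inj, sto g hg_inj⟩ with hpr
  -- submonotonicity transfer except on (a,b)
  have key : ∀ x y : X, ¬(x = a ∧ y = b) → r₀ x y → r₁ x y := by
    intro x y hne hxy
    simp only [hr₀, hr₁] at hxy ⊢
    by_cases hxa : x = a
    · rw [hxa] at hxy ⊢
      by_cases hyb : y = b
      · exact absurd ⟨hxa, hyb⟩ hne
      by_cases hya : y = a
      · rw [hya] at hxy; exact absurd hxy (lt_irrefl _)
      · rw [hfa, hfc y hya hyb] at hxy
        rw [hga, hgc y hya hyb]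
        have := hecard y; omega
    by_cases hxb : x = b
    · rw [hxb] at hxy ⊢
      by_cases hya : y = a
      · rw [hya, hfb, hfa] at hxy; omega
      by_cases hyb : y = b
      · rw [hyb] at hxy; exact absurd hxy (lt_irrefl _)
      · rw [hfb, hfc y hya hyb] at hxy
        rw [hgb, hgc y hya hyb]
        have := hecard y; omega
    · by_cases hya : y = a
      · rw [hya] at hxy
        rw [hfa, hfc x hxa hxb] at hxy
        have := hecard x; omega
      by_cases hyb : y = b
      · rw [hyb] at hxy
        rw [hfb, hfc x hxa hxb] at hxy
        have := hecard x; omega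
      · rw [hfc x hxa hxb, hfc y hya hyb] at hxy
        rw [hgc x hxa hxb, hgc y hya hyb]
        exact hxy
  have hsubR : SubmonoPair trR pr.1 := by
    intro x y htr hxy
    refine key x y ?_ hxy
    rintro ⟨rfl, rfl⟩; exact hR htr
  have hnotS : ¬ SubmonoPair trS pr.1 := by
    intro hsub
    have h1 : r₀ a b := by
      show f b < f a
      rw [hfa, hfb]; omega
    have h2 : g b < g a := hsub a b hS h1
    rw [hga, hgb] at h2; omega
  -- greatest elements
  have hga0 : GreatestElem r₀ a := by
    intro x hx
    show f x < f a
    rw [hfa]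
    by_cases hxb : x = b
    · rw [hxb, hfb]; omega
    · rw [hfc x hx hxb]; have := hecard x; omega
  have hgb1 : GreatestElem r₁ b := by
    intro x hx
    show g x < g b
    rw [hgb]
    by_cases hxa : x = a
    · rw [hxa, hga]; omega
    · rw [hgc x hxa hx]; have := hecard x; omega
  have huniq : ∀ (u : X → ℕ) (m m' : X),
      GreatestElem (fun x y => u y < u x) m → GreatestElem (fun x y => u y < u x) m' →
      m = m' := by
    intro u m m' h1 h2
    by_contra hne
    have := h1 m' (Ne.symm hne)
    have := h2 m hne
    omega
  -- the distribution
  set h : LatentPref X → ℝ≥0 := fun q => if q = pr then 1 else 0 with hh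
  have hdist : IsPrefDist h := by
    unfold IsPrefDist
    rw [finsum_eq_single h pr (fun q hq => by simp [hh, hq])]
    simp [hh]
  refine ⟨h, ⟨hdist, ?_⟩, ?_, pr, hnotS, by simp [hh]⟩
  · intro q hq
    by_cases hqp : q = pr
    · exact absurd (hqp ▸ hsubR) hq
    · simp [hh, hqp]
  · intro x x' htr
    unfold inducedIR
    apply finsum_eq_zero_of_forall_eq_zero
    intro q
    by_cases hqp : q = pr
    · subst hqp
      have hP : ¬ (GreatestElem pr.1.1 x ∧ GreatestElem pr.1.2 x') := by
        rintro ⟨h1, h2⟩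
        have hx : x = a := huniq f x a h1 hga0
        have hx' : x' = b := huniq g x' b h2 hgb1
        subst hx; subst hx'; exact hR htr
      haveI : IsEmpty (GreatestElem pr.1.1 x ∧ GreatestElem pr.1.2 x') := ⟨hP⟩
      exact finsum_of_isEmpty _
    · have hq0 : h q = 0 := by simp [hh, hqp]
      rw [hq0]
      exact finsum_zero
end

section
/- Let X be a finite type and let ⊵ᴿ and ⊵* be two relations on X. Suppose there exist a, b ∈ X with a ≠ b such that a ⊵ᴿ b but ¬(a ⊵* b). Then there exists a distribution h over latent preference types such that h is ⊵*-submonotone and p_h(a,b) > 0; in particular, imposing ⊵*-submonotonicity does not rule out the instrument-response type (a,b) even though it is ruled out by the restriction associated with ⊵ᴿ. -/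
open scoped NNReal

lemma sto_of_inj {X : Type*} {F : X → ℕ} (hF : Function.Injective F) :
    IsStrictTotalOrder X (fun x y => F x < F y) where
  irrefl := fun x h => lt_irrefl _ h
  trans := fun _ _ _ h h' => lt_trans h h'
  trichotomous := fun x y => by
    rcases Nat.lt_trichotomy (F x) (F y) with h | h | h
    · exact fun h1 => absurd h h1
    · exact fun _ _ => hF h
    · exact fun _ h2 => absurd h h2

/-- **Lemma, part 3.** If `⊵ᴿ` relates some pair `(a, b)` of distinct
elements not related by `⊵*`, then there is a `⊵*`-submonotone distribution over latent
preference types that assigns positive probability to the instrument-response type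
`(a, b)`, even though `(a, b)` is ruled out by the restriction associated with `⊵ᴿ`. -/
theorem submonotone_other_relation_does_not_rule_out
    {X : Type*} [Fintype X]
    (trR trS : X → X → Prop)
    (a b : X) (hab : a ≠ b) (hR : trR a b) (hS : ¬ trS a b) :
    ∃ h : LatentPref X → ℝ≥0, SubmonoDist trS h ∧ 0 < inducedIR h a b := by
  classical
  set e := Fintype.equivFin X with he
  set F : X → ℕ := fun x => if x = a then 0 else if x = b then 1 else (e x : ℕ) + 2
    with hFdef
  have Fa : F a = 0 := by simp [hFdef]
  have Fb : F b = 1 := by simp [hFdef, hab.symm]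
  have Fge : ∀ x, x ≠ a → x ≠ b → 2 ≤ F x := by
    intro x hxa hxb; simp [hFdef, hxa, hxb]
  have key0 : ∀ z, F z = 0 → z = a := by
    intro z hz
    by_contra hza
    by_cases hzb : z = b
    · rw [hzb, Fb] at hz; omega
    · have := Fge z hza hzb; omega
  have key1 : ∀ z, F z = 1 → z = b := by
    intro z hz
    by_contra hzb
    by_cases hza : z = a
    · rw [hza, Fa] at hz; omega
    · have := Fge z hza hzb; omega
  have Finj : Function.Injective F := by
    intro x y hxy
    by_cases hxa : x = a
    · subst hxa
      exact (key0 y (by rw [← hxy, Fa])).symm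
    · by_cases hxb : x = b
      · subst hxb
        exact (key1 y (by rw [← hxy, Fb])).symm
      · by_cases hya : y = a
        · subst hya; exact key0 x (by rw [hxy, Fa])
        · by_cases hyb : y = b
          · subst hyb; exact key1 x (by rw [hxy, Fb])
          · simp only [hFdef, if_neg hxa, if_neg hxb, if_neg hya, if_neg hyb,
              Nat.add_right_cancel_iff] at hxy
            exact e.injective (Fin.val_injective hxy)
  set s : X ≃ X := Equiv.swap a b with hs
  set r₀ : X → X → Prop := fun x y => F x < F y with hr₀
  set r₁ : X → X → Prop := fun x y => F (s x) < F (s y) with hr₁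
  have sto₀ : IsStrictTotalOrder X r₀ := sto_of_inj Finj
  have sto₁ : IsStrictTotalOrder X r₁ :=
    sto_of_inj (Finj.comp (Equiv.injective s))
  set pr₀ : LatentPref X := ⟨(r₀, r₁), sto₀, sto₁⟩ with hpr₀
  set h : LatentPref X → ℝ≥0 := fun pr => if pr = pr₀ then 1 else 0 with hh
  have hzero : ∀ pr : LatentPref X, pr ≠ pr₀ → h pr = 0 := by
    intro pr hpr; simp [hh, hpr]
  have hsub : SubmonoPair trS pr₀.1 := by
    intro x y htS h0
    have h0' : F x < F y := h0
    show F (Equiv.swap a b x) < F (Equiv.swap a b y)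
    by_cases hxa : x = a
    · by_cases hyb : y = b
      · rw [hxa, hyb] at htS; exact absurd htS hS
      · have hya : y ≠ a := by intro hc; rw [hxa, hc] at h0'; exact lt_irrefl _ h0'
        rw [hxa, Equiv.swap_apply_left, Equiv.swap_apply_of_ne_of_ne hya hyb, Fb]
        have := Fge y hya hyb
        omega
    · by_cases hxb : x = b
      · have hyb : y ≠ b := by intro hc; rw [hxb, hc] at h0'; exact lt_irrefl _ h0'
        have hya : y ≠ a := by
          intro hc; rw [hxb, hc, Fa, Fb] at h0'; omega
        rw [hxb, Equiv.swap_apply_right, Equiv.swap_apply_of_ne_of_ne hya hyb, Fa]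
        have := Fge y hya hyb
        omega
      · have hya : y ≠ a := by
          intro hc; rw [hc, Fa] at h0'; omega
        by_cases hyb : y = b
        · rw [hyb, Fb] at h0'
          have := Fge x hxa hxb
          omega
        · rw [Equiv.swap_apply_of_ne_of_ne hxa hxb,
            Equiv.swap_apply_of_ne_of_ne hya hyb]
          exact h0'
  refine ⟨h, ⟨?_, ?_⟩, ?_⟩
  · -- IsPrefDist
    unfold IsPrefDist
    rw [finsum_eq_single h pr₀ hzero]
    simp [hh]
  · -- vanishes on non-submonotone pairs
    intro pr hpr
    refine hzero pr ?_
    rintro rfl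
    exact hpr hsub
  · -- positive induced probability
    have hG₀ : GreatestElem r₀ a := by
      intro x hx
      show F a < F x
      rw [Fa]
      have : F x ≠ 0 := by rw [← Fa]; exact fun hc => hx (Finj hc)
      omega
    have hG₁ : GreatestElem r₁ b := by
      intro x hx
      show F (Equiv.swap a b b) < F (Equiv.swap a b x)
      rw [Equiv.swap_apply_right, Fa]
      have hne : Equiv.swap a b x ≠ a := by
        intro hc
        apply hx
        have := (Equiv.swap a b).injective (hc.trans (Equiv.swap_apply_right a b).symm)
        exact this
      have : F (Equiv.swap a b x) ≠ 0 := by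
        rw [← Fa]; exact fun hc => hne (Finj hc)
      omega
    unfold inducedIR
    rw [finsum_eq_single _ pr₀ ?side]
    case side =>
      intro pr hpr
      rw [hzero pr hpr]
      simp
    rw [finsum_eq_if]
    have hcond : GreatestElem (pr₀ : LatentPref X).1.1 a ∧ GreatestElem (pr₀ : LatentPref X).1.2 b := by
      exact ⟨hG₀, hG₁⟩
    rw [if_pos hcond]
    simp [hh]
end
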